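/- Suppose 0 < γ < 1 and r_obs < (1/(1-γ)) r_back < r_goal with f_t^g = γ^t r_goal + Σ_{j<t}γ^j r_back and f_t^o = γ^t r_obs + Σ_{j<t}γ^j r_back. Then for every t, f_t^o < r_back/(1-γ) < f_t^g; i.e., any trajectory that eventually reaches a goal is strictly better than wandering forever, which is strictly better than any trajectory that eventually hits an obstacle. -/
import Mathlib


theorem goal_better_than_wandering_better_than_obstacle
    (γ robs rback rgoal : ℝ) (hγ0 : 0 < γ) (hγ1 : γ < 1)
    (h1 : robs < (1 / (1 - γ)) * rback) (h2 : (1 / (1 - γ)) * rback < rgoal)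
    (fg fo : ℕ → ℝ)
    (hfg : ∀ t, fg t = γ ^ t * rgoal + ∑ j ∈ Finset.range t, γ ^ j * rback)
    (hfo : ∀ t, fo t = γ ^ t * robs + ∑ j ∈ Finset.range t, γ ^ j * rback) :
    ∀ t : ℕ, fo t < rback / (1 - γ) ∧ rback / (1 - γ) < fg t := by
  intro t
  have hne : (1 : ℝ) - γ ≠ 0 := by linarith
  have hsum : ∑ j ∈ Finset.range t, γ ^ j * rback
      = rback / (1 - γ) - γ ^ t * (rback / (1 - γ)) := by
    have hne' : γ - 1 ≠ 0 := by linarith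
    rw [← Finset.sum_mul, geom_sum_eq (by linarith : γ ≠ 1)]
    field_simp [hne, hne']
    ring
  have hpow : 0 < γ ^ t := pow_pos hγ0 t
  have h1' : γ ^ t * robs < γ ^ t * (rback / (1 - γ)) := by
    apply mul_lt_mul_of_pos_left _ hpow
    rw [div_eq_inv_mul, ← one_div]; exact h1
  have h2' : γ ^ t * (rback / (1 - γ)) < γ ^ t * rgoal := by
    apply mul_lt_mul_of_pos_left _ hpow
    rw [div_eq_inv_mul, ← one_div]; exact h2
  rw [hfo, hfg, hsum]
  constructor <;> linarith
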